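/- Fix n ∈ ℕ and a measurable partition of unity D on X, let μ ∈ Int M(D_m) with an optimizing limit μ' for (μ,n,D), and set ψ = Σ_{g∈D_m} g·ln(μ(g)/μ'(g)) ∈ L^∞(X,m) and ψ_k = ψ + ψ∘αⁿ + ⋯ + ψ∘α^{n(k−1)}. Then for every k ∈ ℕ and every nonnegative f ∈ L¹(X,m), ∫_X e^{ψ_k}·(f∘α^{nk}) dm ≤ ∫_X f dm. -/

import Mathlib

open MeasureTheory Filter Topology
open scoped Classical ENNReal NNReal

noncomputable section

namespace TEntropyPaper

variable {X : Type*} [MeasurableSpace X]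

/-- The mapping `α` is measurable and the shift operator `A f = f ∘ α` is bounded on
`L¹(X, m)`; equivalently `m (α⁻¹ G) ≤ C · m G` for all measurable `G`. -/
def ShiftBounded (m : Measure X) (α : X → X) : Prop :=
  Measurable α ∧ ∃ C : ℝ≥0, ∀ s : Set X, MeasurableSet s → m (α ⁻¹' s) ≤ (C : ℝ≥0∞) * m s

/-- A positive normalized linear functional on `L^∞(X, m)`, encoded as a real-valued
map on functions `X → ℝ` which is linear and positive on essentially bounded
(strongly) measurable functions, respects `m`-a.e. equality, takes the value `1` at the
constant function `1` and (as a normalization) vanishes on functions not in `L^∞`. -/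
structure PosFunctional (m : Measure X) where
  toFun : (X → ℝ) → ℝ
  map_add' : ∀ f g : X → ℝ, MemLp f ⊤ m → MemLp g ⊤ m → toFun (f + g) = toFun f + toFun g
  map_smul' : ∀ (c : ℝ) (f : X → ℝ), MemLp f ⊤ m → toFun (c • f) = c * toFun f
  nonneg' : ∀ f : X → ℝ, MemLp f ⊤ m → (0 : X → ℝ) ≤ᵐ[m] f → 0 ≤ toFun f
  map_one' : toFun (fun _ => 1) = 1
  congr_ae' : ∀ f g : X → ℝ, MemLp f ⊤ m → MemLp g ⊤ m → f =ᵐ[m] g → toFun f = toFun g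
  zero_of_ne' : ∀ f : X → ℝ, ¬ MemLp f ⊤ m → toFun f = 0

/-- Evaluation of a functional in `M(X,m)` against the `L^∞` test functions. -/
def evalMap (m : Measure X) (μ : PosFunctional m) : {f : X → ℝ // MemLp f ⊤ m} → ℝ :=
  fun f => μ.toFun f.1

/-- The weak-* topology on `M(X,m)`: the topology of pointwise convergence on `L^∞`
test functions. -/
instance (m : Measure X) : TopologicalSpace (PosFunctional m) :=
  TopologicalSpace.induced (evalMap m) inferInstance

/-- `α`-invariance of a functional `μ ∈ M(X,m)`: `μ(f ∘ α) = μ(f)`. -/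
def PosFunctional.Invariant (α : X → X) {m : Measure X} (μ : PosFunctional m) : Prop :=
  ∀ f : X → ℝ, MemLp f ⊤ m → μ.toFun (f ∘ α) = μ.toFun f

/-- A measurable partition of unity on `X`: a finite set of nonnegative functions in
`L^∞(X,m)` summing to `1` almost everywhere. -/
def IsPartUnity (m : Measure X) (D : Finset (X → ℝ)) : Prop :=
  (∀ g ∈ D, MemLp g ⊤ m ∧ (0 : X → ℝ) ≤ᵐ[m] g) ∧ ∀ᵐ x ∂m, ∑ g ∈ D, g x = 1

/-- Birkhoff sum `S_n φ = φ + φ∘α + ⋯ + φ∘α^{n-1}`. -/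
def birkhoff (α : X → X) (φ : X → ℝ) (n : ℕ) (x : X) : ℝ :=
  ∑ i ∈ Finset.range n, φ (α^[i] x)

/-- The unit sphere of `L¹(X,m)`. -/
def UnitL1 (m : Measure X) : Set (X → ℝ) := {f | Integrable f m ∧ ∫ x, |f x| ∂m = 1}

/-- The integral `∫_X g · |f ∘ αⁿ| dm`. -/
def wInt (m : Measure X) (α : X → X) (n : ℕ) (g f : X → ℝ) : ℝ :=
  ∫ x, g x * |f (α^[n] x)| ∂m

/-- The summand `w · ln((∫_X g·|f∘αⁿ| dm)/w)` in the definition of `t`-entropy,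
with values in `EReal`: it is `0` when `w = 0` and `-∞` when the integral vanishes
while `w ≠ 0`. -/
def tauTermR (m : Measure X) (α : X → X) (n : ℕ) (w : ℝ) (f g : X → ℝ) : EReal :=
  if w = 0 then 0
  else if wInt m α n g f = 0 then ⊥
  else ((w * Real.log (wInt m α n g f / w) : ℝ) : EReal)

/-- `τ_n(w, D)` for an abstract weight function `w` on the elements of `D`. -/
def tauNDW (m : Measure X) (α : X → X) (n : ℕ) (D : Finset (X → ℝ))
    (w : (X → ℝ) → ℝ) : EReal :=
  if ∃ g ∈ D, (∫⁻ x, ENNReal.ofReal (g x) ∂m) = 0 ∧ 0 < w g then ⊥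
  else ⨆ f ∈ UnitL1 m, ∑ g ∈ D, tauTermR m α n (w g) f g

/-- `τ_n(μ, D)` for `μ ∈ M(X,m)` and a measurable partition of unity `D`. -/
def tauND (m : Measure X) (α : X → X) (μ : PosFunctional m) (n : ℕ)
    (D : Finset (X → ℝ)) : EReal :=
  tauNDW m α n D (fun g => μ.toFun g)

/-- `τ_n(μ) = inf_D τ_n(μ, D)` over all measurable partitions of unity `D`. -/
def tauN (m : Measure X) (α : X → X) (μ : PosFunctional m) (n : ℕ) : EReal :=
  ⨅ D ∈ {D : Finset (X → ℝ) | IsPartUnity m D}, tauND m α μ n D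

/-- The `t`-entropy `τ(μ) = inf_{n ≥ 1} τ_n(μ)/n`. -/
def tEntropy (m : Measure X) (α : X → X) (μ : PosFunctional m) : EReal :=
  ⨅ n : {k : ℕ // 0 < k}, ((((n : ℕ) : ℝ)⁻¹ : ℝ) : EReal) * tauN m α μ (n : ℕ)

/-- The operator norm `‖A_φⁿ‖` of the `n`-th power of the weighted shift operator
`A_φ f = e^φ · (f ∘ α)` on `L¹(X,m)`, i.e. the supremum of `∫ e^{S_nφ}|f∘αⁿ| dm`
over the unit sphere of `L¹`. -/
def weightedOpNorm (m : Measure X) (α : X → X) (φ : X → ℝ) (n : ℕ) : ℝ :=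
  sSup {r : ℝ | ∃ f ∈ UnitL1 m,
    r = ∫ x, Real.exp (birkhoff α φ n x) * |f (α^[n] x)| ∂m}

/-- `D_m`: the elements of `D` which are not `m`-a.e. zero (i.e. `∫ g dm > 0`). -/
def Dm (m : Measure X) (D : Finset (X → ℝ)) : Finset (X → ℝ) :=
  D.filter (fun g => (∫⁻ x, ENNReal.ofReal (g x) ∂m) ≠ 0)

/-- The simplex `M(D)` of probability measures on the finite set `D`, realized as
weight functions vanishing outside `D`. -/
def MD (D : Finset (X → ℝ)) : Set ((X → ℝ) → ℝ) :=
  {w | (∀ g ∈ D, 0 ≤ w g) ∧ (∑ g ∈ D, w g) = 1 ∧ ∀ g ∉ D, w g = 0}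

/-- The sum `Σ_{g ∈ D_m} w(g)·ln((∫ g·|f∘αⁿ| dm)/w(g))`. -/
def tauSumDm (m : Measure X) (α : X → X) (n : ℕ) (D : Finset (X → ℝ))
    (w : (X → ℝ) → ℝ) (f : X → ℝ) : EReal :=
  ∑ g ∈ Dm m D, tauTermR m α n (w g) f g

/-- `τ_n(w, D)` with the sum restricted to `D_m`, for `w ∈ M(D_m)`. -/
def tauDm (m : Measure X) (α : X → X) (n : ℕ) (D : Finset (X → ℝ))
    (w : (X → ℝ) → ℝ) : EReal :=
  ⨆ f ∈ UnitL1 m, tauSumDm m α n D w f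

/-- `w'` is an optimizing limit for `(w, n, D)`: there is a sequence of nonnegative
unit-norm `f_i ∈ L¹(X,m)` along which the supremum defining `τ_n(w,D)` is attained in
the limit and `w'(g) = lim_i ∫ g·(f_i∘αⁿ) dm` for each `g ∈ D_m`. -/
def IsOptLimit (m : Measure X) (α : X → X) (n : ℕ) (D : Finset (X → ℝ))
    (w w' : (X → ℝ) → ℝ) : Prop :=
  ∃ F : ℕ → (X → ℝ),
    (∀ i, F i ∈ UnitL1 m ∧ (0 : X → ℝ) ≤ᵐ[m] F i) ∧
    (∀ g ∈ Dm m D, Tendsto (fun i => wInt m α n g (F i)) atTop (𝓝 (w' g))) ∧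
    Tendsto (fun i => tauSumDm m α n D w (F i)) atTop (𝓝 (tauDm m α n D w))


-- infrastructure

lemma ecoe_sum {ι : Type*} (s : Finset ι) (r : ι → ℝ) :
    ((∑ i ∈ s, r i : ℝ) : EReal) = ∑ i ∈ s, ((r i : ℝ) : EReal) := by
  induction s using Finset.cons_induction with
  | empty => simp
  | cons a s ha ih => rw [Finset.sum_cons, Finset.sum_cons, EReal.coe_add, ih]

lemma memtop_bound {m : Measure X} {g : X → ℝ} (hg : MemLp g ⊤ m) :
    ∃ B : ℝ, 0 ≤ B ∧ ∀ᵐ x ∂m, |g x| ≤ B := by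
  refine ⟨(eLpNormEssSup g m).toReal, ENNReal.toReal_nonneg, ?_⟩
  filter_upwards [ae_le_eLpNormEssSup (f := g) (μ := m)] with x hx
  have h2 : eLpNormEssSup g m < ⊤ := by
    have := hg.2; rwa [eLpNorm_exponent_top] at this
  have := ENNReal.toReal_mono h2.ne hx
  simpa [abs] using this

section shift
variable {m : Measure X} {α : X → X}

lemma ShiftBounded.iterate (hα : ShiftBounded m α) (j : ℕ) : ShiftBounded m (α^[j]) := by
  induction j with
  | zero => exact ⟨measurable_id, 1, fun s hs => by simp⟩
  | succ j ih =>
    obtain ⟨hm, C, hC⟩ := ih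
    obtain ⟨hm', C', hC'⟩ := hα
    refine ⟨hm.comp hm', C' * C, fun s hs => ?_⟩
    have : α^[j+1] ⁻¹' s = α ⁻¹' (α^[j] ⁻¹' s) := by
      ext x; simp [Function.iterate_succ_apply, Set.mem_preimage]
    rw [this]
    calc m (α ⁻¹' (α^[j] ⁻¹' s)) ≤ C' * m (α^[j] ⁻¹' s) := hC' _ (hm hs)
      _ ≤ C' * (C * m s) := by gcongr; exact hC s hs
      _ = ↑(C' * C) * m s := by push_cast; ring

lemma ShiftBounded.null (hα : ShiftBounded m α) {s : Set X} (hs : m s = 0) : m (α ⁻¹' s) = 0 := by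
  obtain ⟨hm, C, hC⟩ := hα
  obtain ⟨t, hst, htm, ht0⟩ := exists_measurable_superset_of_null hs
  have : m (α ⁻¹' t) = 0 := le_antisymm (by simpa [ht0] using hC t htm) (by simp)
  exact measure_mono_null (Set.preimage_mono hst) this

lemma ShiftBounded.ae_comp (hα : ShiftBounded m α) {p : X → Prop} (hp : ∀ᵐ x ∂m, p x) : ∀ᵐ x ∂m, p (α x) := by
  have : {x | ¬ p (α x)} ⊆ α ⁻¹' {x | ¬ p x} := fun x hx => hx
  exact measure_mono_null this (hα.null hp)

lemma ShiftBounded.map_le (hα : ShiftBounded m α) : ∃ C : ℝ≥0, m.map α ≤ (C : ℝ≥0∞) • m := by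
  obtain ⟨hm, C, hC⟩ := hα
  exact ⟨C, Measure.le_iff.mpr fun s hs => by
    rw [Measure.map_apply hm hs]; simpa using hC s hs⟩

lemma ShiftBounded.map_ac (hα : ShiftBounded m α) : m.map α ≪ m := by
  obtain ⟨C, hC⟩ := hα.map_le
  exact Measure.AbsolutelyContinuous.mk fun s hs h0 => by
    have := Measure.le_iff.mp hC s hs
    simpa [h0] using this

lemma ShiftBounded.aesm_comp (hα : ShiftBounded m α) {f : X → ℝ} (hf : AEStronglyMeasurable f m) :
    AEStronglyMeasurable (fun x => f (α x)) m :=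
  (hf.mono_ac hα.map_ac).comp_aemeasurable hα.1.aemeasurable

lemma ShiftBounded.integrable_comp (hα : ShiftBounded m α) {f : X → ℝ} (hf : Integrable f m) :
    Integrable (fun x => f (α x)) m := by
  obtain ⟨C, hC⟩ := hα.map_le
  have h1 : Integrable f (m.map α) :=
    ((hf.smul_measure (c := (C : ℝ≥0∞)) ENNReal.coe_ne_top).mono_measure hC)
  exact h1.comp_aemeasurable hα.1.aemeasurable

lemma ShiftBounded.integral_abs_comp_le (hα : ShiftBounded m α) :
    ∃ C : ℝ≥0, ∀ f : X → ℝ, Integrable f m → ∫ x, |f (α x)| ∂m ≤ (C : ℝ) * ∫ x, |f x| ∂m := by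
  obtain ⟨C, hC⟩ := hα.map_le
  refine ⟨C, fun f hf => ?_⟩
  have hsm := hf.aestronglyMeasurable
  have h1 : ∫ x, |f (α x)| ∂m = (∫⁻ x, ‖f (α x)‖₊ ∂m).toReal := by
    exact integral_norm_eq_lintegral_enorm (hα.aesm_comp hsm)
  have h2 : ∫ x, |f x| ∂m = (∫⁻ x, ‖f x‖₊ ∂m).toReal := by
    exact integral_norm_eq_lintegral_enorm hsm
  have h3 : (∫⁻ x, ‖f (α x)‖₊ ∂m) ≤ C * ∫⁻ x, ‖f x‖₊ ∂m := by
    have hmap : ∫⁻ x, ‖f x‖₊ ∂(m.map α) = ∫⁻ x, ‖f (α x)‖₊ ∂m :=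
      lintegral_map' ((hsm.mono_ac hα.map_ac).enorm) hα.1.aemeasurable
    calc (∫⁻ x, ‖f (α x)‖₊ ∂m) = ∫⁻ x, ‖f x‖₊ ∂(m.map α) := hmap.symm
      _ ≤ ∫⁻ x, ‖f x‖₊ ∂((C : ℝ≥0∞) • m) := lintegral_mono' hC le_rfl
      _ = C * ∫⁻ x, ‖f x‖₊ ∂m := lintegral_smul_measure _ _
  rw [h1, h2]
  have hfin : (C : ℝ≥0∞) * ∫⁻ x, ‖f x‖₊ ∂m ≠ ⊤ :=
    ENNReal.mul_ne_top ENNReal.coe_ne_top hf.2.ne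
  calc (∫⁻ x, ‖f (α x)‖₊ ∂m).toReal ≤ ((C : ℝ≥0∞) * ∫⁻ x, ‖f x‖₊ ∂m).toReal :=
        ENNReal.toReal_mono hfin h3
    _ = (C : ℝ) * (∫⁻ x, ‖f x‖₊ ∂m).toReal := by
        rw [ENNReal.toReal_mul]; simp

end shift
section part
variable {m : Measure X} {α : X → X} {D : Finset (X → ℝ)} {n : ℕ}

lemma Dm_subset : Dm m D ⊆ D := Finset.filter_subset _ _

lemma notDm_ae_zero (hD : IsPartUnity m D) {g : X → ℝ} (hgD : g ∈ D) (hg : g ∉ Dm m D) :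
    g =ᵐ[m] 0 := by
  have h0 : (∫⁻ x, ENNReal.ofReal (g x) ∂m) = 0 := by
    by_contra h; exact hg (Finset.mem_filter.mpr ⟨hgD, h⟩)
  have hgm : AEMeasurable (fun x => ENNReal.ofReal (g x)) m :=
    ENNReal.measurable_ofReal.comp_aemeasurable (hD.1 g hgD).1.aestronglyMeasurable.aemeasurable
  have h1 := (lintegral_eq_zero_iff' hgm).mp h0
  filter_upwards [h1, (hD.1 g hgD).2] with x hx hx2
  have : ENNReal.ofReal (g x) = 0 := hx
  rw [ENNReal.ofReal_eq_zero] at this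
  exact le_antisymm this hx2

lemma Dm_sum_one (hD : IsPartUnity m D) : ∀ᵐ x ∂m, ∑ g ∈ Dm m D, g x = 1 := by
  have hz : ∀ᵐ x ∂m, ∀ g ∈ D, g ∉ Dm m D → g x = 0 := by
    rw [Finset.eventually_all]
    intro g hgD
    by_cases hg : g ∈ Dm m D
    · filter_upwards with x hx; exact absurd hg hx
    · filter_upwards [notDm_ae_zero hD hgD hg] with x hx _; exact hx
  filter_upwards [hD.2, hz] with x hx hxz
  rw [← hx]
  exact Finset.sum_subset Dm_subset (fun g hgD hg => hxz g hgD hg)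

lemma ae_nonneg_Dm (hD : IsPartUnity m D) : ∀ᵐ x ∂m, ∀ g ∈ Dm m D, 0 ≤ g x := by
  rw [Finset.eventually_all]
  intro g hg
  exact (hD.1 g (Dm_subset hg)).2

end part

section wint
variable {m : Measure X} {α : X → X} {n : ℕ}

lemma integrable_g_mul_abs (hα : ShiftBounded m α) {g f : X → ℝ} (hg : MemLp g ⊤ m)
    (hf : Integrable f m) : Integrable (fun x => g x * |f (α^[n] x)|) m := by
  have h1 : Integrable (fun x => |f (α^[n] x)|) m :=
    ((hα.iterate n).integrable_comp hf).abs
  obtain ⟨B, hB0, hB⟩ := memtop_bound hg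
  exact Integrable.bdd_mul h1 hg.aestronglyMeasurable
    (by filter_upwards [hB] with x hx; simpa using hx)

lemma integrable_g_mul (hα : ShiftBounded m α) {g f : X → ℝ} (hg : MemLp g ⊤ m)
    (hf : Integrable f m) : Integrable (fun x => g x * f (α^[n] x)) m := by
  have h1 : Integrable (fun x => f (α^[n] x)) m := (hα.iterate n).integrable_comp hf
  obtain ⟨B, hB0, hB⟩ := memtop_bound hg
  exact Integrable.bdd_mul h1 hg.aestronglyMeasurable
    (by filter_upwards [hB] with x hx; simpa using hx)

lemma wInt_nonneg {g f : X → ℝ} (hg0 : (0:X → ℝ) ≤ᵐ[m] g) : 0 ≤ wInt m α n g f := by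
  refine integral_nonneg_of_ae ?_
  filter_upwards [hg0] with x hx
  exact mul_nonneg hx (abs_nonneg _)

lemma wInt_smul {g f : X → ℝ} {c : ℝ} (hc : 0 ≤ c) :
    wInt m α n g (fun x => c * f x) = c * wInt m α n g f := by
  unfold wInt
  rw [← integral_const_mul]
  congr 1; funext x
  rw [abs_mul, abs_of_nonneg hc]; ring

lemma wInt_add (hα : ShiftBounded m α) {g f₁ f₂ : X → ℝ} (hg : MemLp g ⊤ m)
    (h1 : Integrable f₁ m) (h2 : Integrable f₂ m)
    (h10 : (0:X → ℝ) ≤ᵐ[m] f₁) (h20 : (0:X → ℝ) ≤ᵐ[m] f₂) :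
    wInt m α n g (fun x => f₁ x + f₂ x) = wInt m α n g f₁ + wInt m α n g f₂ := by
  unfold wInt
  have e1 : ∀ᵐ x ∂m, 0 ≤ f₁ (α^[n] x) := (hα.iterate n).ae_comp h10
  have e2 : ∀ᵐ x ∂m, 0 ≤ f₂ (α^[n] x) := (hα.iterate n).ae_comp h20
  have := integral_congr_ae (g := fun x => g x * |f₁ (α^[n] x)| + g x * |f₂ (α^[n] x)|)
    (μ := m) (f := fun x => g x * |f₁ (α^[n] x) + f₂ (α^[n] x)|) ?_
  · rw [this, integral_add (integrable_g_mul_abs hα hg h1) (integrable_g_mul_abs hα hg h2)]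
  · filter_upwards [e1, e2] with x hx1 hx2
    rw [abs_of_nonneg (add_nonneg hx1 hx2), abs_of_nonneg hx1, abs_of_nonneg hx2]; ring

lemma wInt_bound (hα : ShiftBounded m α) {g : X → ℝ} (hg : MemLp g ⊤ m) :
    ∃ K : ℝ, 0 < K ∧ ∀ f : X → ℝ, f ∈ UnitL1 m → wInt m α n g f < K := by
  obtain ⟨B, hB0, hB⟩ := memtop_bound hg
  obtain ⟨C', hC'⟩ := (hα.iterate n).integral_abs_comp_le
  refine ⟨B * C' + 1, by positivity, fun f hf => ?_⟩
  have hfint := hf.1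
  have hcomp : Integrable (fun x => |f (α^[n] x)|) m := ((hα.iterate n).integrable_comp hfint).abs
  have step1 : wInt m α n g f ≤ ∫ x, B * |f (α^[n] x)| ∂m := by
    refine integral_mono_ae (integrable_g_mul_abs hα hg hfint) (hcomp.const_mul B) ?_
    filter_upwards [hB] with x hx
    exact mul_le_mul_of_nonneg_right ((le_abs_self _).trans hx) (abs_nonneg _)
  have step2 : ∫ x, B * |f (α^[n] x)| ∂m = B * ∫ x, |f (α^[n] x)| ∂m := integral_const_mul _ _
  have step3 := hC' f hfint
  rw [hf.2, mul_one] at step3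
  calc wInt m α n g f ≤ B * ∫ x, |f (α^[n] x)| ∂m := by rw [← step2]; exact step1
    _ ≤ B * (C' : ℝ) := mul_le_mul_of_nonneg_left step3 hB0
    _ < B * C' + 1 := lt_add_one _

end wint

section star
variable {m : Measure X} {α : X → X} {n : ℕ} {D : Finset (X → ℝ)} {w w' : (X → ℝ) → ℝ}

lemma star_unit (hα : ShiftBounded m α) (hD : IsPartUnity m D)
    (hw : w ∈ MD (Dm m D)) (hwpos : ∀ g ∈ Dm m D, 0 < w g)
    (hopt : IsOptLimit m α n D w w') (hw'pos : ∀ g ∈ Dm m D, 0 < w' g)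
    (f : X → ℝ) (hf : f ∈ UnitL1 m) (hf0 : (0 : X → ℝ) ≤ᵐ[m] f) :
    ∑ g ∈ Dm m D, (w g / w' g) * wInt m α n g f ≤ 1 := by
  classical
  obtain ⟨F, hF, hFw', hFtau⟩ := hopt
  set b : (X → ℝ) → ℝ := fun g => wInt m α n g f with hb
  have hb0 : ∀ g ∈ Dm m D, 0 ≤ b g := fun g hg => wInt_nonneg (hD.1 g (Dm_subset hg)).2
  -- eventually all a i g positive
  have hevA : ∀ᶠ i in atTop, ∀ g ∈ Dm m D, 0 < wInt m α n g (F i) :=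
    ((Dm m D).eventually_all).mpr fun g hg =>
      (hFw' g hg).eventually (eventually_gt_nhds (hw'pos g hg))
  set S : ℕ → ℝ := fun i => ∑ g ∈ Dm m D, w g * Real.log (wInt m α n g (F i) / w g) with hSdef
  -- eventual identification of tauSumDm with S
  have hSev : ∀ᶠ i in atTop, tauSumDm m α n D w (F i) = ((S i : ℝ) : EReal) := by
    filter_upwards [hevA] with i hi
    rw [hSdef]
    simp only
    rw [ecoe_sum]
    refine Finset.sum_congr rfl fun g hg => ?_
    rw [tauTermR, if_neg (hwpos g hg).ne', if_neg (hi g hg).ne']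
  -- upper bound for tauDm
  have hKex : ∀ g : X → ℝ, ∃ K : ℝ, 0 < K ∧
      ∀ f' ∈ UnitL1 m, g ∈ Dm m D → wInt m α n g f' < K := by
    intro g
    by_cases hg : g ∈ Dm m D
    · obtain ⟨K, hK0, hK⟩ := wInt_bound (n := n) hα (hD.1 g (Dm_subset hg)).1
      exact ⟨K, hK0, fun f' hf' _ => hK f' hf'⟩
    · exact ⟨1, one_pos, fun f' _ hgg => absurd hgg hg⟩
  choose K hK0 hKlt using hKex
  set T : ℝ := ∑ g ∈ Dm m D, w g * Real.log (K g / w g) with hT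
  have htop : tauDm m α n D w ≤ ((T : ℝ) : EReal) := by
    rw [tauDm]
    refine iSup₂_le fun f' hf' => ?_
    rw [tauSumDm, hT, ecoe_sum]
    refine Finset.sum_le_sum fun g hg => ?_
    rw [tauTermR, if_neg (hwpos g hg).ne']
    by_cases h0 : wInt m α n g f' = 0
    · rw [if_pos h0]; exact bot_le
    · rw [if_neg h0]
      have hpos : 0 < wInt m α n g f' :=
        lt_of_le_of_ne (wInt_nonneg (hD.1 g (Dm_subset hg)).2) (Ne.symm h0)
      have hlt := hKlt g f' hf' hg
      rw [EReal.coe_le_coe_iff]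
      refine mul_le_mul_of_nonneg_left ?_ (hwpos g hg).le
      exact Real.log_le_log (div_pos hpos (hwpos g hg))
        ((div_le_div_iff_of_pos_right (hwpos g hg)).mpr hlt.le)
  -- tauDm is a real number
  obtain ⟨i₀, hi₀, hSev₀⟩ := (hevA.and hSev).exists
  have hle₀ : ((S i₀ : ℝ) : EReal) ≤ tauDm m α n D w := by
    rw [← hSev₀]; exact le_biSup _ (hF i₀).1
  have hbot : tauDm m α n D w ≠ ⊥ := fun h => by
    rw [h, le_bot_iff] at hle₀; exact EReal.coe_ne_bot _ hle₀
  have hnetop : tauDm m α n D w ≠ ⊤ := fun h => by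
    rw [h] at htop; exact (EReal.coe_lt_top T).not_ge htop
  set L : ℝ := (tauDm m α n D w).toReal with hLdef
  have hL : tauDm m α n D w = ((L : ℝ) : EReal) := (EReal.coe_toReal hnetop hbot).symm
  have hS : Tendsto S atTop (𝓝 L) := by
    rw [← EReal.tendsto_coe]
    exact Tendsto.congr' hSev (hL ▸ hFtau)
  -- the key inequality for fixed t
  have hRlim : ∀ t ∈ Set.Ioo (0:ℝ) 1,
      ∑ g ∈ Dm m D, w g * Real.log (1 + t * (b g / w' g - 1)) ≤ 0 := by
    intro t ht
    set R : ℕ → ℝ := fun i =>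
      ∑ g ∈ Dm m D, w g * Real.log (1 + t * (b g / wInt m α n g (F i) - 1)) with hRdef
    have hkey : ∀ᶠ i in atTop, S i + R i ≤ L := by
      filter_upwards [hevA] with i hi
      set ft : X → ℝ := fun x => (1 - t) * F i x + t * f x with hft
      have hft0 : (0 : X → ℝ) ≤ᵐ[m] ft := by
        filter_upwards [(hF i).2, hf0] with x h1 h2
        have : (0:ℝ) ≤ (1 - t) * F i x + t * f x :=
          add_nonneg (mul_nonneg (by linarith [ht.2]) h1) (mul_nonneg ht.1.le h2)
        simpa [hft] using this
      have hfti : Integrable ft m := ((hF i).1.1.const_mul _).add (hf.1.const_mul _)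
      have hint1 : ∫ x, F i x ∂m = 1 := by
        rw [← (hF i).1.2]
        refine integral_congr_ae ?_
        filter_upwards [(hF i).2] with x hx
        exact (abs_of_nonneg hx).symm
      have hintf : ∫ x, f x ∂m = 1 := by
        rw [← hf.2]
        refine integral_congr_ae ?_
        filter_upwards [hf0] with x hx
        exact (abs_of_nonneg hx).symm
      have hftU : ft ∈ UnitL1 m := by
        refine ⟨hfti, ?_⟩
        have h1 : ∫ x, |ft x| ∂m = ∫ x, ft x ∂m := by
          refine integral_congr_ae ?_
          filter_upwards [hft0] with x hx
          exact abs_of_nonneg hx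
        rw [h1, hft]
        rw [integral_add ((hF i).1.1.const_mul _) (hf.1.const_mul _),
          integral_const_mul, integral_const_mul, hint1, hintf]
        ring
      have hwft : ∀ g ∈ Dm m D, wInt m α n g ft
          = (1 - t) * wInt m α n g (F i) + t * b g := by
        intro g hg
        have hgtop := (hD.1 g (Dm_subset hg)).1
        have := wInt_add (n := n) hα hgtop ((hF i).1.1.const_mul (1-t)) (hf.1.const_mul t)
          (by filter_upwards [(hF i).2] with x hx
              exact mul_nonneg (by linarith [ht.2]) hx)
          (by filter_upwards [hf0] with x hx; exact mul_nonneg ht.1.le hx)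
        rw [hft]
        rw [show (fun x => (1-t) * F i x + t * f x)
            = (fun x => (fun x => (1-t) * F i x) x + (fun x => t * f x) x) from rfl] at *
        rw [this, wInt_smul (by linarith [ht.2] : (0:ℝ) ≤ 1 - t), wInt_smul ht.1.le]
      have hle : tauSumDm m α n D w ft ≤ ((L : ℝ) : EReal) := by
        rw [← hL]; exact le_biSup _ hftU
      have heq : tauSumDm m α n D w ft
          = ((∑ g ∈ Dm m D, w g * Real.log (((1-t) * wInt m α n g (F i) + t * b g) / w g)
              : ℝ) : EReal) := by
        rw [tauSumDm, ecoe_sum]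
        refine Finset.sum_congr rfl fun g hg => ?_
        have hpos : 0 < (1-t) * wInt m α n g (F i) + t * b g := by
          have h1 : 0 < (1-t) * wInt m α n g (F i) :=
            mul_pos (by linarith [ht.2]) (hi g hg)
          have h2 : 0 ≤ t * b g := mul_nonneg ht.1.le (hb0 g hg)
          linarith
        rw [tauTermR, if_neg (hwpos g hg).ne', hwft g hg, if_neg hpos.ne']
      rw [heq, EReal.coe_le_coe_iff] at hle
      -- rewrite the sum
      have hsplit : ∀ g ∈ Dm m D,
          w g * Real.log (((1-t) * wInt m α n g (F i) + t * b g) / w g)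
          = w g * Real.log (wInt m α n g (F i) / w g)
            + w g * Real.log (1 + t * (b g / wInt m α n g (F i) - 1)) := by
        intro g hg
        have ha := hi g hg
        have hwg := hwpos g hg
        have hfac : ((1-t) * wInt m α n g (F i) + t * b g) / w g
            = (wInt m α n g (F i) / w g) * (1 + t * (b g / wInt m α n g (F i) - 1)) := by
          field_simp
          ring
        have hpos2 : 0 < 1 + t * (b g / wInt m α n g (F i) - 1) := by
          have : 1 + t * (b g / wInt m α n g (F i) - 1)
              = (1 - t) + t * (b g / wInt m α n g (F i)) := by ring
          rw [this]
          have : 0 ≤ t * (b g / wInt m α n g (F i)) :=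
            mul_nonneg ht.1.le (div_nonneg (hb0 g hg) ha.le)
          linarith [ht.2]
        rw [hfac, Real.log_mul (div_pos ha hwg).ne' hpos2.ne', mul_add]
      rw [Finset.sum_congr rfl hsplit, Finset.sum_add_distrib] at hle
      exact hle
    -- take i → ∞
    have hRt : Tendsto R atTop
        (𝓝 (∑ g ∈ Dm m D, w g * Real.log (1 + t * (b g / w' g - 1)))) := by
      refine tendsto_finset_sum _ fun g hg => ?_
      have h1 : Tendsto (fun i => b g / wInt m α n g (F i)) atTop (𝓝 (b g / w' g)) :=
        tendsto_const_nhds.div (hFw' g hg) (hw'pos g hg).ne'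
      have hne : (1 : ℝ) + t * (b g / w' g - 1) ≠ 0 := by
        have : 1 + t * (b g / w' g - 1) = (1 - t) + t * (b g / w' g) := by ring
        rw [this]
        have h2 : 0 ≤ t * (b g / w' g) :=
          mul_nonneg ht.1.le (div_nonneg (hb0 g hg) (hw'pos g hg).le)
        have h3 : (0:ℝ) < 1 - t := by linarith [ht.2]
        exact ne_of_gt (by linarith)
      have h2 : Tendsto (fun i => 1 + t * (b g / wInt m α n g (F i) - 1)) atTop
          (𝓝 (1 + t * (b g / w' g - 1))) :=
        (((h1.sub_const 1).const_mul t).const_add 1)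
      exact ((Real.continuousAt_log hne).tendsto.comp h2).const_mul _
    have := le_of_tendsto (hS.add hRt) hkey
    linarith
  -- let t → 0⁺
  set s : (X → ℝ) → ℝ := fun g => b g / w' g with hs
  have hderiv : Tendsto (fun t : ℝ => ∑ g ∈ Dm m D, w g * (Real.log (1 + t * (s g - 1)) / t))
      (𝓝[>] (0:ℝ)) (𝓝 (∑ g ∈ Dm m D, w g * (s g - 1))) := by
    refine tendsto_finset_sum _ fun g hg => ?_
    have h1 : HasDerivAt (fun t : ℝ => 1 + t * (s g - 1)) (s g - 1) 0 := by
      simpa using ((hasDerivAt_id (0:ℝ)).mul_const (s g - 1)).const_add 1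
    have h2 : HasDerivAt (fun t : ℝ => Real.log (1 + t * (s g - 1))) (s g - 1) 0 := by
      have := (Real.hasDerivAt_log (by norm_num : (1:ℝ) + 0 * (s g - 1) ≠ 0)).comp 0 h1
      simpa [Function.comp_def] using this
    have h3 := hasDerivAt_iff_tendsto_slope.mp h2
    have h4 : Tendsto (fun t : ℝ => Real.log (1 + t * (s g - 1)) / t) (𝓝[≠] (0:ℝ))
        (𝓝 (s g - 1)) := by
      refine h3.congr' ?_
      filter_upwards [self_mem_nhdsWithin] with t ht
      rw [slope_def_field]
      simp
    exact ((h4.mono_left (nhdsWithin_mono _ fun x hx => ne_of_gt hx)).const_mul _)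
  have hev : ∀ᶠ t in 𝓝[>] (0:ℝ),
      ∑ g ∈ Dm m D, w g * (Real.log (1 + t * (s g - 1)) / t) ≤ 0 := by
    filter_upwards [Ioo_mem_nhdsGT_of_mem (Set.mem_Ico.mpr ⟨le_refl 0, one_pos⟩)] with t ht
    have h1 := hRlim t ht
    have : ∑ g ∈ Dm m D, w g * (Real.log (1 + t * (s g - 1)) / t)
        = (∑ g ∈ Dm m D, w g * Real.log (1 + t * (s g - 1))) / t := by
      rw [Finset.sum_div]
      exact Finset.sum_congr rfl fun g hg => by ring
    rw [this]
    exact div_nonpos_of_nonpos_of_nonneg h1 ht.1.le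
  have hfinal : ∑ g ∈ Dm m D, w g * (s g - 1) ≤ 0 := le_of_tendsto hderiv hev
  have hsum1 : ∑ g ∈ Dm m D, w g = 1 := hw.2.1
  have : ∑ g ∈ Dm m D, w g * s g - ∑ g ∈ Dm m D, w g ≤ 0 := by
    rw [← Finset.sum_sub_distrib]
    refine le_trans (le_of_eq (Finset.sum_congr rfl fun g hg => by ring)) hfinal
  have h5 : ∑ g ∈ Dm m D, w g * s g ≤ 1 := by rw [hsum1] at this; linarith
  refine le_trans (le_of_eq (Finset.sum_congr rfl fun g hg => ?_)) h5
  rw [hs]; ring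

lemma star (hα : ShiftBounded m α) (hD : IsPartUnity m D)
    (hw : w ∈ MD (Dm m D)) (hwpos : ∀ g ∈ Dm m D, 0 < w g)
    (hopt : IsOptLimit m α n D w w') (hw'pos : ∀ g ∈ Dm m D, 0 < w' g)
    (f : X → ℝ) (hf : Integrable f m) (hf0 : (0 : X → ℝ) ≤ᵐ[m] f) :
    ∑ g ∈ Dm m D, (w g / w' g) * wInt m α n g f ≤ ∫ x, f x ∂m := by
  have hc0 : 0 ≤ ∫ x, f x ∂m := integral_nonneg_of_ae hf0
  rcases eq_or_lt_of_le hc0 with hc | hc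
  · have hf0' : f =ᵐ[m] 0 := (integral_eq_zero_iff_of_nonneg_ae hf0 hf).mp hc.symm
    have hz : ∀ g ∈ Dm m D, wInt m α n g f = 0 := by
      intro g hg
      have hcomp : ∀ᵐ x ∂m, f (α^[n] x) = 0 :=
        (hα.iterate n).ae_comp (p := fun y => f y = 0) hf0'
      rw [wInt, integral_congr_ae (g := fun _ => (0:ℝ))
        (by filter_upwards [hcomp] with x hx; simp [hx]), integral_zero]
    rw [← hc]
    exact le_of_eq (Finset.sum_eq_zero fun g hg => by rw [hz g hg, mul_zero])
  · set c := ∫ x, f x ∂m with hcdef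
    set f' : X → ℝ := fun x => c⁻¹ * f x with hf'def
    have hf'int : Integrable f' m := hf.const_mul _
    have hf'0 : (0 : X → ℝ) ≤ᵐ[m] f' := by
      filter_upwards [hf0] with x hx
      exact mul_nonneg (inv_nonneg.mpr hc.le) hx
    have hintf : ∫ x, |f x| ∂m = c := by
      rw [hcdef]
      exact integral_congr_ae (by filter_upwards [hf0] with x hx; exact abs_of_nonneg hx)
    have hf'U : f' ∈ UnitL1 m := by
      refine ⟨hf'int, ?_⟩
      have : ∫ x, |f' x| ∂m = c⁻¹ * ∫ x, |f x| ∂m := by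
        rw [← integral_const_mul]
        exact integral_congr_ae (by
          filter_upwards with x
          rw [hf'def]
          simp [abs_mul, abs_of_nonneg (inv_nonneg.mpr hc.le)])
      rw [this, hintf, inv_mul_cancel₀ hc.ne']
    have h := star_unit hα hD hw hwpos hopt hw'pos f' hf'U hf'0
    have hscale : ∀ g, wInt m α n g f' = c⁻¹ * wInt m α n g f := fun g =>
      wInt_smul (inv_nonneg.mpr hc.le)
    have h2 : c⁻¹ * ∑ g ∈ Dm m D, (w g / w' g) * wInt m α n g f ≤ 1 := by
      rw [Finset.mul_sum]
      refine le_trans (le_of_eq (Finset.sum_congr rfl fun g hg => ?_)) h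
      rw [hscale g]; ring
    have := mul_le_mul_of_nonneg_left h2 hc.le
    rw [mul_one] at this
    calc ∑ g ∈ Dm m D, (w g / w' g) * wInt m α n g f
        = c * (c⁻¹ * ∑ g ∈ Dm m D, (w g / w' g) * wInt m α n g f) := by
          field_simp
      _ ≤ c := this

end star

section psi
variable {m : Measure X} {α : X → X} {n : ℕ} {D : Finset (X → ℝ)} {w w' : (X → ℝ) → ℝ}
  {ψ : X → ℝ}

lemma psi_aesm (hD : IsPartUnity m D)
    (hψ : ψ = fun y => ∑ g ∈ Dm m D, g y * Real.log (w g / w' g)) :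
    AEStronglyMeasurable ψ m := by
  rw [hψ]
  exact Finset.aestronglyMeasurable_fun_sum _ fun g hg =>
    ((hD.1 g (Dm_subset hg)).1.aestronglyMeasurable).mul_const _

lemma psi_bound (hD : IsPartUnity m D)
    (hψ : ψ = fun y => ∑ g ∈ Dm m D, g y * Real.log (w g / w' g)) :
    ∃ B : ℝ, 0 ≤ B ∧ ∀ᵐ x ∂m, |ψ x| ≤ B := by
  classical
  have hBex : ∀ g : X → ℝ, ∃ B : ℝ, 0 ≤ B ∧ (g ∈ Dm m D → ∀ᵐ x ∂m, |g x| ≤ B) := by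
    intro g
    by_cases hg : g ∈ Dm m D
    · obtain ⟨B, hB0, hB⟩ := memtop_bound (hD.1 g (Dm_subset hg)).1
      exact ⟨B, hB0, fun _ => hB⟩
    · exact ⟨0, le_refl _, fun hgg => absurd hgg hg⟩
  choose B hB0 hB using hBex
  refine ⟨∑ g ∈ Dm m D, B g * |Real.log (w g / w' g)|,
    Finset.sum_nonneg fun g hg => mul_nonneg (hB0 g) (abs_nonneg _), ?_⟩
  have hall : ∀ᵐ x ∂m, ∀ g ∈ Dm m D, |g x| ≤ B g :=
    ((Dm m D).eventually_all).mpr fun g hg => hB g hg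
  filter_upwards [hall] with x hx
  rw [hψ]
  calc |∑ g ∈ Dm m D, g x * Real.log (w g / w' g)|
      ≤ ∑ g ∈ Dm m D, |g x * Real.log (w g / w' g)| := Finset.abs_sum_le_sum_abs _ _
    _ ≤ ∑ g ∈ Dm m D, B g * |Real.log (w g / w' g)| := by
        refine Finset.sum_le_sum fun g hg => ?_
        rw [abs_mul]
        exact mul_le_mul_of_nonneg_right (hx g hg) (abs_nonneg _)

lemma jensen (hD : IsPartUnity m D) (hwpos : ∀ g ∈ Dm m D, 0 < w g)
    (hw'pos : ∀ g ∈ Dm m D, 0 < w' g)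
    (hψ : ψ = fun y => ∑ g ∈ Dm m D, g y * Real.log (w g / w' g)) :
    ∀ᵐ x ∂m, Real.exp (ψ x) ≤ ∑ g ∈ Dm m D, g x * (w g / w' g) := by
  filter_upwards [Dm_sum_one hD, ae_nonneg_Dm hD] with x h1 h2
  rw [hψ]
  have hgm := Real.geom_mean_le_arith_mean_weighted (Dm m D) (fun g => g x)
    (fun g => w g / w' g) h2 h1
    (fun g hg => (div_pos (hwpos g hg) (hw'pos g hg)).le)
  calc Real.exp (∑ g ∈ Dm m D, g x * Real.log (w g / w' g))
      = ∏ g ∈ Dm m D, (w g / w' g) ^ (g x) := by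
        rw [Real.exp_sum]
        refine Finset.prod_congr rfl fun g hg => ?_
        rw [Real.rpow_def_of_pos (div_pos (hwpos g hg) (hw'pos g hg))]
        ring_nf
    _ ≤ ∑ g ∈ Dm m D, g x * (w g / w' g) := hgm

lemma one_step (hα : ShiftBounded m α) (hD : IsPartUnity m D)
    (hw : w ∈ MD (Dm m D)) (hwpos : ∀ g ∈ Dm m D, 0 < w g)
    (hopt : IsOptLimit m α n D w w') (hw'pos : ∀ g ∈ Dm m D, 0 < w' g)
    (hψ : ψ = fun y => ∑ g ∈ Dm m D, g y * Real.log (w g / w' g))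
    (h : X → ℝ) (hh : Integrable h m) (hh0 : (0 : X → ℝ) ≤ᵐ[m] h) :
    ∫ x, Real.exp (ψ x) * h (α^[n] x) ∂m ≤ ∫ x, h x ∂m := by
  set H : X → ℝ := fun x => h (α^[n] x) with hHdef
  have hHi : Integrable H m := (hα.iterate n).integrable_comp hh
  have hH0 : ∀ᵐ x ∂m, 0 ≤ H x := (hα.iterate n).ae_comp (p := fun y => 0 ≤ h y) hh0
  have hjen := jensen hD hwpos hw'pos hψ
  obtain ⟨B, hB0, hB⟩ := psi_bound hD hψ
  have hexp_aesm : AEStronglyMeasurable (fun x => Real.exp (ψ x)) m :=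
    Real.continuous_exp.comp_aestronglyMeasurable (psi_aesm hD hψ)
  have hLHSint : Integrable (fun x => Real.exp (ψ x) * H x) m := by
    refine Integrable.bdd_mul (c := Real.exp B) hHi hexp_aesm ?_
    filter_upwards [hB] with x hx
    rw [Real.norm_eq_abs, abs_of_pos (Real.exp_pos _)]
    exact Real.exp_le_exp.mpr ((le_abs_self _).trans hx)
  have hterm : ∀ g ∈ Dm m D, Integrable (fun x => (w g / w' g) * (g x * H x)) m :=
    fun g hg => ((integrable_g_mul hα (hD.1 g (Dm_subset hg)).1 hh).const_mul _)
  have hRHSint : Integrable (fun x => ∑ g ∈ Dm m D, (w g / w' g) * (g x * H x)) m :=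
    integrable_finset_sum _ hterm
  have hmono : ∀ᵐ x ∂m, Real.exp (ψ x) * H x
      ≤ ∑ g ∈ Dm m D, (w g / w' g) * (g x * H x) := by
    filter_upwards [hjen, hH0] with x h1 h2
    calc Real.exp (ψ x) * H x ≤ (∑ g ∈ Dm m D, g x * (w g / w' g)) * H x :=
          mul_le_mul_of_nonneg_right h1 h2
      _ = ∑ g ∈ Dm m D, (w g / w' g) * (g x * H x) := by
          rw [Finset.sum_mul]
          exact Finset.sum_congr rfl fun g hg => by ring
  have h1 : ∫ x, Real.exp (ψ x) * H x ∂m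
      ≤ ∫ x, ∑ g ∈ Dm m D, (w g / w' g) * (g x * H x) ∂m :=
    integral_mono_ae hLHSint hRHSint hmono
  have h2 : ∫ x, ∑ g ∈ Dm m D, (w g / w' g) * (g x * H x) ∂m
      = ∑ g ∈ Dm m D, (w g / w' g) * ∫ x, g x * H x ∂m := by
    rw [integral_finset_sum _ hterm]
    exact Finset.sum_congr rfl fun g hg => integral_const_mul _ _
  have h3 : ∀ g ∈ Dm m D, ∫ x, g x * H x ∂m = wInt m α n g h := by
    intro g hg
    rw [wInt]
    refine integral_congr_ae ?_
    filter_upwards [hH0] with x hx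
    rw [hHdef]
    simp only
    rw [abs_of_nonneg hx]
  calc ∫ x, Real.exp (ψ x) * h (α^[n] x) ∂m
      = ∫ x, Real.exp (ψ x) * H x ∂m := rfl
    _ ≤ ∑ g ∈ Dm m D, (w g / w' g) * ∫ x, g x * H x ∂m := h1.trans_eq h2
    _ = ∑ g ∈ Dm m D, (w g / w' g) * wInt m α n g h :=
        Finset.sum_congr rfl fun g hg => by rw [h3 g hg]
    _ ≤ ∫ x, h x ∂m := star hα hD hw hwpos hopt hw'pos h hh hh0

lemma main_aux (hα : ShiftBounded m α) (hD : IsPartUnity m D)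
    (hw : w ∈ MD (Dm m D)) (hwpos : ∀ g ∈ Dm m D, 0 < w g)
    (hopt : IsOptLimit m α n D w w') (hw'pos : ∀ g ∈ Dm m D, 0 < w' g)
    (hψ : ψ = fun y => ∑ g ∈ Dm m D, g y * Real.log (w g / w' g))
    (k : ℕ) : ∀ f : X → ℝ, Integrable f m → (0 : X → ℝ) ≤ᵐ[m] f →
    ∫ x, Real.exp (∑ j ∈ Finset.range k, ψ (α^[n * j] x)) * f (α^[n * k] x) ∂m
      ≤ ∫ x, f x ∂m := by
  induction k with
  | zero => intro f hf hf0; simp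
  | succ k ih =>
    intro f hf hf0
    obtain ⟨B, hB0, hB⟩ := psi_bound hD hψ
    set H : X → ℝ := fun y =>
      Real.exp (∑ j ∈ Finset.range k, ψ (α^[n * j] y)) * f (α^[n * k] y) with hHdef
    have hexp_aesm : AEStronglyMeasurable
        (fun y => Real.exp (∑ j ∈ Finset.range k, ψ (α^[n * j] y))) m := by
      refine Real.continuous_exp.comp_aestronglyMeasurable ?_
      exact Finset.aestronglyMeasurable_fun_sum _ fun j hj =>
        (hα.iterate (n * j)).aesm_comp (psi_aesm hD hψ)
    have hbdd : ∀ᵐ x ∂m, ∀ j ∈ Finset.range k, |ψ (α^[n * j] x)| ≤ B :=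
      ((Finset.range k).eventually_all).mpr fun j hj =>
        (hα.iterate (n * j)).ae_comp (p := fun y => |ψ y| ≤ B) hB
    have hHi : Integrable H m := by
      refine Integrable.bdd_mul (c := Real.exp (k * B))
        ((hα.iterate (n * k)).integrable_comp hf) hexp_aesm ?_
      filter_upwards [hbdd] with x hx
      rw [Real.norm_eq_abs, abs_of_pos (Real.exp_pos _)]
      refine Real.exp_le_exp.mpr ?_
      calc ∑ j ∈ Finset.range k, ψ (α^[n * j] x)
          ≤ ∑ j ∈ Finset.range k, B := Finset.sum_le_sum fun j hj =>
            (le_abs_self _).trans (hx j hj)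
        _ = k * B := by rw [Finset.sum_const, Finset.card_range, nsmul_eq_mul]
    have hH0 : (0 : X → ℝ) ≤ᵐ[m] H := by
      filter_upwards [(hα.iterate (n * k)).ae_comp (p := fun y => 0 ≤ f y) hf0] with x hx
      exact mul_nonneg (Real.exp_pos _).le hx
    have step := one_step hα hD hw hwpos hopt hw'pos hψ H hHi hH0
    have key : ∀ x, Real.exp (∑ j ∈ Finset.range (k+1), ψ (α^[n * j] x))
        * f (α^[n * (k+1)] x) = Real.exp (ψ x) * H (α^[n] x) := by
      intro x
      have e1 : ∀ j, α^[n * (j+1)] x = α^[n * j] (α^[n] x) := fun j => by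
        rw [show n * (j+1) = n * j + n by ring, Function.iterate_add_apply]
      rw [Finset.sum_range_succ', Real.exp_add]
      simp only [e1, Nat.mul_zero, Function.iterate_zero_apply, hHdef]
      ring
    calc ∫ x, Real.exp (∑ j ∈ Finset.range (k+1), ψ (α^[n * j] x))
          * f (α^[n * (k+1)] x) ∂m
        = ∫ x, Real.exp (ψ x) * H (α^[n] x) ∂m := by
          exact integral_congr_ae (Filter.Eventually.of_forall key)
      _ ≤ ∫ x, H x ∂m := step
      _ ≤ ∫ x, f x ∂m := ih f hf hf0

end psi

/-- Let `μ ∈ Int M(D_m)` with optimizing limit `μ'`, and set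
`ψ = Σ_{g∈D_m} g·ln(μ(g)/μ'(g))` and `ψ_k = ψ + ψ∘αⁿ + ⋯ + ψ∘α^{n(k−1)}`.
Then for every `k` and every nonnegative `f ∈ L¹(X,m)`,
`∫ e^{ψ_k}·(f∘α^{nk}) dm ≤ ∫ f dm`. -/
theorem exp_psi_k_integral_le
    (m : Measure X) [SigmaFinite m] (α : X → X) (hα : ShiftBounded m α)
    (n : ℕ) (hn : 0 < n) (D : Finset (X → ℝ)) (hD : IsPartUnity m D)
    (w w' : (X → ℝ) → ℝ) (hw : w ∈ MD (Dm m D)) (hwpos : ∀ g ∈ Dm m D, 0 < w g)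
    (hopt : IsOptLimit m α n D w w') (hw'pos : ∀ g ∈ Dm m D, 0 < w' g)
    (ψ : X → ℝ) (hψ : ψ = fun y => ∑ g ∈ Dm m D, g y * Real.log (w g / w' g))
    (k : ℕ) (f : X → ℝ) (hf : Integrable f m) (hf0 : (0 : X → ℝ) ≤ᵐ[m] f) :
    ∫ x, Real.exp (∑ j ∈ Finset.range k, ψ (α^[n * j] x)) * f (α^[n * k] x) ∂m
      ≤ ∫ x, f x ∂m :=
  main_aux hα hD hw hwpos hopt hw'pos hψ k f hf hf0
end TEntropyPaper
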